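/- Let d_x, d_y be positive natural numbers, A a d_y × d_x real matrix, b ∈ ℝ^{d_y}, σ > 0, and define the homoscedastic Gaussian regression likelihood p(y|x) = (2πσ²)^{−d_y/2} · exp(−‖y − (A x + b)‖²/(2σ²)) for x ∈ ℝ^{d_x}, y ∈ ℝ^{d_y}. Then for every λ ∈ ℝ, every x_i, x_j ∈ ℝ^{d_x}, and every y ∈ ℝ^{d_y}, the log-likelihood at the mixed input decomposes as log p(y | λ·x_i + (1−λ)·x_j) = λ · log p(y | x_i) + (1−λ) · log p(y | x_j) + λ(1−λ)·‖A(x_i − x_j)‖²/(2σ²), where the additive constant λ(1−λ)·‖A(x_i − x_j)‖²/(2σ²) does not depend on y. Hence, for a linear regression learner with homoscedastic Gaussian likelihood, probabilistic mixup with log-linear pooling reduces to vanilla mixup: p(y | λx_i+(1−λ)x_j) is proportional, as a function of y, to p(y|x_i)^λ · p(y|x_j)^{1−λ}. -/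

import Mathlib

open Real Finset

/-- For a linear regression learner with homoscedastic Gaussian likelihood,
the log-likelihood at the mixed input decomposes as the convex combination of the
log-likelihoods plus a `y`-independent constant; hence probabilistic mixup with
log-linear pooling reduces to vanilla mixup. -/
theorem linearRegression_probMix_eq_mixup
    (dx dy : ℕ) (hdx : 0 < dx) (hdy : 0 < dy)
    (A : Matrix (Fin dy) (Fin dx) ℝ) (b : Fin dy → ℝ) (σ : ℝ) (hσ : 0 < σ)
    (p : (Fin dx → ℝ) → (Fin dy → ℝ) → ℝ)
    (hp : ∀ x y, p x y = (2 * Real.pi * σ ^ 2) ^ (-(dy : ℝ) / 2) *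
      Real.exp (-(∑ k, (y k - (A.mulVec x + b) k) ^ 2) / (2 * σ ^ 2)))
    (lam : ℝ) (xi xj : Fin dx → ℝ) :
    (∀ y : Fin dy → ℝ,
      Real.log (p (lam • xi + (1 - lam) • xj) y) =
        lam * Real.log (p xi y) + (1 - lam) * Real.log (p xj y)
          + lam * (1 - lam) * (∑ k, (A.mulVec (xi - xj)) k ^ 2) / (2 * σ ^ 2)) ∧
    (∀ y : Fin dy → ℝ,
      p (lam • xi + (1 - lam) • xj) y =
        Real.exp (lam * (1 - lam) * (∑ k, (A.mulVec (xi - xj)) k ^ 2) / (2 * σ ^ 2)) *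
          (p xi y ^ lam * p xj y ^ (1 - lam))) := by
  have hC : (0:ℝ) < (2 * Real.pi * σ ^ 2) ^ (-(dy : ℝ) / 2) :=
    Real.rpow_pos_of_pos (by positivity) _
  have hmean : ∀ k, (A.mulVec (lam • xi + (1 - lam) • xj) + b) k
      = lam * ((A.mulVec xi + b) k) + (1 - lam) * ((A.mulVec xj + b) k) := by
    intro k
    simp [Matrix.mulVec_add, Matrix.mulVec_smul, Pi.add_apply, Pi.smul_apply, smul_eq_mul]
    ring
  have hdiff : ∀ k, (A.mulVec (xi - xj)) k = (A.mulVec xi + b) k - (A.mulVec xj + b) k := by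
    intro k
    simp [Matrix.mulVec_sub, Pi.sub_apply, Pi.add_apply]
  have hsum : ∀ y : Fin dy → ℝ,
      ∑ k, (y k - (A.mulVec (lam • xi + (1 - lam) • xj) + b) k) ^ 2
        = lam * (∑ k, (y k - (A.mulVec xi + b) k) ^ 2)
          + (1 - lam) * (∑ k, (y k - (A.mulVec xj + b) k) ^ 2)
          - lam * (1 - lam) * (∑ k, (A.mulVec (xi - xj)) k ^ 2) := by
    intro y
    rw [Finset.mul_sum, Finset.mul_sum, Finset.mul_sum, ← Finset.sum_add_distrib,
      ← Finset.sum_sub_distrib]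
    refine Finset.sum_congr rfl fun k _ => ?_
    rw [hmean k, hdiff k]
    ring
  have hlog : ∀ x y, Real.log (p x y)
      = Real.log ((2 * Real.pi * σ ^ 2) ^ (-(dy : ℝ) / 2))
        - (∑ k, (y k - (A.mulVec x + b) k) ^ 2) / (2 * σ ^ 2) := by
    intro x y
    rw [hp, Real.log_mul hC.ne' (Real.exp_ne_zero _), Real.log_exp]
    ring
  constructor
  · intro y
    rw [hlog, hlog, hlog, hsum y]
    field_simp
    ring
  · intro y
    have h1 : p xi y ^ lam
        = Real.exp (lam * (Real.log ((2 * Real.pi * σ ^ 2) ^ (-(dy : ℝ) / 2))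
            - (∑ k, (y k - (A.mulVec xi + b) k) ^ 2) / (2 * σ ^ 2))) := by
      rw [hp, Real.rpow_def_of_pos (by positivity),
        Real.log_mul hC.ne' (Real.exp_ne_zero _), Real.log_exp]
      exact congrArg Real.exp (by ring)
    have h2 : p xj y ^ (1 - lam)
        = Real.exp ((1 - lam) * (Real.log ((2 * Real.pi * σ ^ 2) ^ (-(dy : ℝ) / 2))
            - (∑ k, (y k - (A.mulVec xj + b) k) ^ 2) / (2 * σ ^ 2))) := by
      rw [hp, Real.rpow_def_of_pos (by positivity),
        Real.log_mul hC.ne' (Real.exp_ne_zero _), Real.log_exp]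
      exact congrArg Real.exp (by ring)
    rw [hp, h1, h2, hsum y, ← Real.exp_log hC, ← Real.exp_add, ← Real.exp_add,
      ← Real.exp_add]
    refine congrArg Real.exp ?_
    simp only [Real.log_exp]
    field_simp
    ring
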